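/- (Uniqueness half of the Orlicz decomposition) Let ψ be an Orlicz function and Ω a bounded smooth domain. If f ∈ L^ψ(Ω, Cl_n) is both left monogenic (Df = 0 weakly) and of the form f = D̄g for some g ∈ W_0^{1,ψ}(Ω, Cl_n), then f = 0 almost everywhere; i.e., A^ψ(Ω, Cl_n) ∩ D̄(W_0^{1,ψ}(Ω, Cl_n)) = {0}. -/

import Mathlib

open MeasureTheory

/-- The quadratic form `Q(x) = -‖x‖²` on `ℝⁿ`, generating the Clifford algebra `Cl_n`. -/
noncomputable def Qneg (n : ℕ) : QuadraticForm ℝ (EuclideanSpace ℝ (Fin n)) :=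
  -(LinearMap.BilinMap.toQuadraticMap (innerₗ (EuclideanSpace ℝ (Fin n))))


noncomputable def uu (n : ℕ) (i : Fin n) : CliffordAlgebra (Qneg n) :=
  CliffordAlgebra.ι (Qneg n) (EuclideanSpace.single i 1)

lemma polar_single (n : ℕ) (i j : Fin n) :
    QuadraticMap.polar (Qneg n) (EuclideanSpace.single i 1) (EuclideanSpace.single j 1)
      = if i = j then -2 else 0 := by
  rcases eq_or_ne i j with rfl | h
  · simp [Qneg, QuadraticMap.polar, LinearMap.BilinMap.toQuadraticMap_apply, innerₗ_apply_apply,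
      inner_add_left, inner_add_right, EuclideanSpace.inner_single_left,
      EuclideanSpace.single_apply]
    ring
  · simp [Qneg, QuadraticMap.polar, LinearMap.BilinMap.toQuadraticMap_apply, innerₗ_apply_apply,
      inner_add_left, inner_add_right, EuclideanSpace.inner_single_left,
      EuclideanSpace.single_apply, h, h.symm]

lemma anticomm (n : ℕ) (i j : Fin n) :
    uu n i * uu n j + uu n j * uu n i = (if i = j then (-2 : ℝ) else 0) • 1 := by
  rw [uu, uu, CliffordAlgebra.ι_mul_ι_add_swap, polar_single, Algebra.algebraMap_eq_smul_one]

lemma cliff_sum (n : ℕ) (c : Fin n → Fin n → ℝ) (hc : ∀ i j, c i j = c j i)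
    (m : CliffordAlgebra (Qneg n)) :
    ∑ j : Fin n, ∑ i : Fin n, c j i • (uu n j * (-(uu n i)) * m)
      = (∑ i : Fin n, c i i) • m := by
  have key : ∑ j : Fin n, ∑ i : Fin n, c j i • (uu n j * uu n i)
      = (-∑ i : Fin n, c i i) • (1 : CliffordAlgebra (Qneg n)) := by
    set S := ∑ j : Fin n, ∑ i : Fin n, c j i • (uu n j * uu n i) with hS
    have hswap : S = ∑ j : Fin n, ∑ i : Fin n, c j i • (uu n i * uu n j) := by
      rw [hS, Finset.sum_comm]
      refine Finset.sum_congr rfl fun j _ => Finset.sum_congr rfl fun i _ => by rw [hc]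
    have h2 : (2:ℝ) • S = (2:ℝ) • ((-∑ i : Fin n, c i i) • (1 : CliffordAlgebra (Qneg n))) := by
      have : (2:ℝ) • S = S + S := by rw [two_smul]
      rw [this]
      nth_rewrite 2 [hswap]
      rw [← Finset.sum_add_distrib]
      have : ∀ j : Fin n, (∑ i : Fin n, c j i • (uu n j * uu n i))
          + (∑ i : Fin n, c j i • (uu n i * uu n j))
          = ∑ i : Fin n, c j i • ((if j = i then (-2:ℝ) else 0) • (1 : CliffordAlgebra (Qneg n))) := by
        intro j
        rw [← Finset.sum_add_distrib]
        refine Finset.sum_congr rfl fun i _ => ?_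
        rw [← smul_add, anticomm]
      simp only [this, smul_smul]
      rw [Finset.sum_congr rfl (fun j _ => Finset.sum_congr rfl (fun i _ => by
        rw [mul_ite, mul_neg, mul_zero]))]
      simp [Finset.sum_ite_eq, smul_smul]
      ring_nf
      rw [Finset.sum_mul, Finset.sum_smul]
    have := congrArg (fun x => (2:ℝ)⁻¹ • x) h2
    simpa [smul_smul] using this
  calc ∑ j : Fin n, ∑ i : Fin n, c j i • (uu n j * (-(uu n i)) * m)
      = (∑ j : Fin n, ∑ i : Fin n, c j i • (uu n j * uu n i)) * (-m) := by
        rw [Finset.sum_mul]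
        refine Finset.sum_congr rfl fun j _ => ?_
        rw [Finset.sum_mul]
        refine Finset.sum_congr rfl fun i _ => ?_
        rw [smul_mul_assoc]
        congr 1
        simp [mul_assoc]
    _ = (∑ i : Fin n, c i i) • m := by
        rw [key, smul_mul_assoc, one_mul, neg_smul, smul_neg, neg_neg]


lemma no_local_max_of_pos_second_deriv {φ φ' : ℝ → ℝ}
    (hd : ∀ᶠ t in nhds (0:ℝ), HasDerivAt φ (φ' t) t)
    (hmax : IsLocalMax φ 0) {d : ℝ} (hd' : HasDerivAt φ' d 0) (hdp : 0 < d) : False := by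
  have h00 : HasDerivAt φ (φ' 0) 0 := hd.self_of_nhds
  have h0 : φ' 0 = 0 := by
    have := hmax.deriv_eq_zero
    rwa [h00.deriv] at this
  have hslope : Filter.Tendsto (slope φ' 0) (nhdsWithin 0 {(0:ℝ)}ᶜ) (nhds d) :=
    hasDerivAt_iff_tendsto_slope.mp hd'
  have hev : ∀ᶠ t in nhdsWithin 0 {(0:ℝ)}ᶜ, 0 < slope φ' 0 t :=
    hslope.eventually (eventually_gt_nhds hdp)
  -- turn the three eventual statements into a δ
  have hev2 : ∀ᶠ t in nhds (0:ℝ), HasDerivAt φ (φ' t) t ∧ φ t ≤ φ 0 := hd.and hmax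
  obtain ⟨δ₁, hδ₁, h1⟩ := Metric.eventually_nhds_iff.mp hev2
  obtain ⟨δ₂, hδ₂, h2⟩ := Metric.eventually_nhds_iff.mp (eventually_nhdsWithin_iff.mp hev)
  set b := min δ₁ δ₂ / 2 with hbdef
  have hb : 0 < b := by positivity
  have hbmem : ∀ t ∈ Set.Icc (0:ℝ) b, dist t 0 < δ₁ ∧ dist t 0 < δ₂ := by
    intro t ht
    rw [Real.dist_eq, sub_zero, abs_of_nonneg ht.1]
    constructor
    · calc t ≤ b := ht.2
        _ < min δ₁ δ₂ := by rw [hbdef]; linarith [lt_min hδ₁ hδ₂]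
        _ ≤ δ₁ := min_le_left _ _
    · calc t ≤ b := ht.2
        _ < min δ₁ δ₂ := by rw [hbdef]; linarith [lt_min hδ₁ hδ₂]
        _ ≤ δ₂ := min_le_right _ _
  have hcont : ContinuousOn φ (Set.Icc 0 b) := fun t ht =>
    ((h1 (hbmem t ht).1).1.continuousAt).continuousWithinAt
  have hderiv : ∀ t ∈ Set.Ioo (0:ℝ) b, HasDerivAt φ (φ' t) t := fun t ht =>
    (h1 (hbmem t ⟨le_of_lt ht.1, le_of_lt ht.2⟩).1).1
  obtain ⟨c, hc, hceq⟩ := exists_hasDerivAt_eq_slope φ φ' hb hcont hderiv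
  have hcpos : 0 < φ' c := by
    have hcd : dist c 0 < δ₂ := (hbmem c ⟨le_of_lt hc.1, le_of_lt hc.2⟩).2
    have hcne : c ∈ ({(0:ℝ)}ᶜ : Set ℝ) := by simp [ne_of_gt hc.1]
    have := h2 hcd hcne
    rw [slope_def_field, h0, sub_zero, sub_zero] at this
    have := mul_pos this hc.1
    rwa [div_mul_cancel₀ _ (ne_of_gt hc.1)] at this
  have hle : φ b ≤ φ 0 := (h1 (hbmem b ⟨le_of_lt hb, le_refl b⟩).1).2
  rw [hceq] at hcpos
  have : (φ b - φ 0) / (b - 0) ≤ 0 := by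
    apply div_nonpos_of_nonpos_of_nonneg <;> linarith
  linarith


lemma second_symm {n : ℕ} {f : EuclideanSpace ℝ (Fin n) → ℝ}
    {x v w : EuclideanSpace ℝ (Fin n)} (hf : ContDiffAt ℝ 2 f x) :
    fderiv ℝ (fun y => fderiv ℝ f y v) x w = fderiv ℝ (fun y => fderiv ℝ f y w) x v := by
  have hdf : DifferentiableAt ℝ (fderiv ℝ f) x :=
    (hf.fderiv_right (m := 1) (by norm_num)).differentiableAt (by norm_num)
  have key : ∀ a b : EuclideanSpace ℝ (Fin n),
      fderiv ℝ (fun y => fderiv ℝ f y a) x b = fderiv ℝ (fderiv ℝ f) x b a := by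
    intro a b
    rw [fderiv_clm_apply hdf (differentiableAt_const a)]
    simp
  rw [key, key]
  exact (hf.isSymmSndFDerivAt (by norm_num)) w v



open EuclideanSpace in
lemma harmonic_nonpos {n : ℕ} (hn : 0 < n) {Ω : Set (EuclideanSpace ℝ (Fin n))}
    (hΩo : IsOpen Ω) (hΩb : Bornology.IsBounded Ω) {g : EuclideanSpace ℝ (Fin n) → ℝ}
    (hC2 : ContDiffOn ℝ 2 g Ω) (hcont : ContinuousOn g (closure Ω))
    (htr : ∀ x ∈ frontier Ω, g x = 0)
    (hharm : ∀ x ∈ Ω, ∑ i : Fin n,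
      fderiv ℝ (fun y => fderiv ℝ g y (single i 1)) x (single i 1) = 0) :
    ∀ x ∈ Ω, g x ≤ 0 := by
  intro x hx
  obtain ⟨R, hR⟩ := hΩb.closure.subset_closedBall 0
  have key : ∀ ε : ℝ, 0 < ε → g x ≤ ε * R ^ 2 := by
    intro ε hε
    set q : EuclideanSpace ℝ (Fin n) → ℝ := fun y => inner ℝ y y with hq
    have hq' : ∀ y, q y = ‖y‖ ^ 2 := fun y => real_inner_self_eq_norm_sq y
    set G : EuclideanSpace ℝ (Fin n) → ℝ := fun y => g y + ε * q y with hG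
    have hqc : Continuous q := continuous_id.inner continuous_id
    have hqd : ∀ (y : EuclideanSpace ℝ (Fin n)), DifferentiableAt ℝ q y := fun y =>
      differentiableAt_fun_id.inner ℝ differentiableAt_fun_id
    have hqC : ContDiff ℝ 2 q := contDiff_id.inner ℝ contDiff_id
    have hfq : ∀ (y w : EuclideanSpace ℝ (Fin n)),
        fderiv ℝ q y w = 2 * (inner ℝ y w : ℝ) := by
      intro y w
      have h := fderiv_inner_apply (𝕜 := ℝ)
        (differentiableAt_fun_id (x := y)) (differentiableAt_fun_id (x := y)) w
      simp only [fderiv_id', ContinuousLinearMap.coe_id', id_eq] at h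
      rw [hq]
      rw [show (fun y : EuclideanSpace ℝ (Fin n) => (inner ℝ y y : ℝ))
        = fun t => (inner ℝ (id t) (id t) : ℝ) from rfl] at *
      rw [h, real_inner_comm w y]; ring
    have hGC2 : ContDiffOn ℝ 2 G Ω := hC2.add ((contDiff_const.mul hqC).contDiffOn)
    have hGdiff : ∀ y ∈ Ω, DifferentiableAt ℝ G y := fun y hy =>
      (hGC2.contDiffAt (hΩo.mem_nhds hy)).differentiableAt (by norm_num)
    have hGc : ContinuousOn G (closure Ω) :=
      hcont.add ((continuous_const.mul hqc).continuousOn)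
    have hK : IsCompact (closure Ω) := hΩb.isCompact_closure
    obtain ⟨z, hzK, hzmax⟩ := hK.exists_isMaxOn ⟨x, subset_closure hx⟩ hGc
    by_cases hz : z ∈ Ω
    · -- interior max: contradiction
      exfalso
      set d : Fin n → ℝ := fun i =>
        fderiv ℝ (fun y => fderiv ℝ G y (single i 1)) z (single i 1) with hd
      -- differentiability of directional derivative maps
      have hdirdiff : ∀ (F : EuclideanSpace ℝ (Fin n) → ℝ), ContDiffOn ℝ 2 F Ω →
          ∀ (v : EuclideanSpace ℝ (Fin n)), ∀ y ∈ Ω,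
          DifferentiableAt ℝ (fun w => fderiv ℝ F w v) y := by
        intro F hF v y hy
        have h1 : ContDiffAt ℝ 1 (fderiv ℝ F) y :=
          (hF.contDiffAt (hΩo.mem_nhds hy)).fderiv_right (by norm_num)
        have hdf : DifferentiableAt ℝ (fderiv ℝ F) y := h1.differentiableAt (by norm_num)
        exact (ContinuousLinearMap.apply ℝ ℝ v).differentiableAt.comp y hdf
      -- d i in terms of g
      have hdsum : ∀ i : Fin n,
          d i = fderiv ℝ (fun y => fderiv ℝ g y (single i 1)) z (single i 1) + 2 * ε := by
        intro i
        set v := (single i 1 : EuclideanSpace ℝ (Fin n)) with hv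
        have heq : (fun y => fderiv ℝ G y v) =ᶠ[nhds z]
            (fun y => fderiv ℝ g y v + ε * (2 * (inner ℝ y v : ℝ))) := by
          filter_upwards [hΩo.mem_nhds hz] with y hy
          have hgdy : DifferentiableAt ℝ g y :=
            (hC2.contDiffAt (hΩo.mem_nhds hy)).differentiableAt (by norm_num)
          have : fderiv ℝ G y = fderiv ℝ g y + ε • fderiv ℝ q y := by
            rw [hG, fderiv_fun_add hgdy ((hqd y).const_mul ε), fderiv_const_mul (hqd y)]
          rw [this]
          simp only [ContinuousLinearMap.add_apply, ContinuousLinearMap.coe_smul',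
            Pi.smul_apply, smul_eq_mul, hfq y v]
        have hlin : DifferentiableAt ℝ
            (fun y : EuclideanSpace ℝ (Fin n) => ε * (2 * (inner ℝ y v : ℝ))) z :=
          ((differentiableAt_fun_id.inner ℝ (differentiableAt_const v)).const_mul 2).const_mul ε
        have hflin : fderiv ℝ (fun y : EuclideanSpace ℝ (Fin n) =>
            ε * (2 * (inner ℝ y v : ℝ))) z v = 2 * ε := by
          rw [fderiv_const_mul ((differentiableAt_fun_id.inner ℝ (differentiableAt_const v)).const_mul 2)]
          rw [ContinuousLinearMap.smul_apply]
          rw [fderiv_const_mul (differentiableAt_fun_id.inner ℝ (differentiableAt_const v))]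
          rw [ContinuousLinearMap.smul_apply]
          have h := fderiv_inner_apply (𝕜 := ℝ)
            (differentiableAt_fun_id (x := z)) (differentiableAt_const (𝕜 := ℝ) v (x := z)) v
          simp only [fderiv_id', fderiv_const, Pi.zero_apply, ContinuousLinearMap.zero_apply,
            ContinuousLinearMap.coe_id', id_eq, inner_zero_right, zero_add] at h
          rw [h]
          have : (inner ℝ v v : ℝ) = 1 := by
            rw [hv, real_inner_self_eq_norm_sq]
            simp [EuclideanSpace.norm_single]
          rw [this]; simp; ring
        show fderiv ℝ (fun y => fderiv ℝ G y v) z v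
          = fderiv ℝ (fun y => fderiv ℝ g y v) z v + 2 * ε
        rw [heq.fderiv_eq]
        rw [fderiv_fun_add (hdirdiff g hC2 v z hz) hlin]
        rw [ContinuousLinearMap.add_apply, hflin]
      -- sum of d i is positive
      have hsum : ∑ i : Fin n, d i = 2 * ε * n := by
        rw [Finset.sum_congr rfl (fun i _ => hdsum i), Finset.sum_add_distrib, hharm z hz]
        simp [mul_comm]
      have hpos : 0 < ∑ i : Fin n, d i := by
        rw [hsum]; positivity
      obtain ⟨i, -, hi⟩ := Finset.exists_lt_of_sum_lt (f := fun _ : Fin n => (0:ℝ)) (g := d)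
        (by simpa using hpos)
      -- line through z in direction single i 1
      set v := (single i 1 : EuclideanSpace ℝ (Fin n)) with hv
      set L : ℝ → EuclideanSpace ℝ (Fin n) := fun t => z + t • v with hL
      have hLc : Continuous L := by fun_prop
      have hL0 : L 0 = z := by simp [hL]
      have hLd : ∀ t : ℝ, HasDerivAt L v t := by
        intro t
        have := ((hasDerivAt_id t).smul_const v).const_add z
        simpa only [id_eq, one_smul] using this
      have hLΩ : ∀ᶠ t in nhds (0:ℝ), L t ∈ Ω := by
        have : Ω ∈ nhds (L 0) := hΩo.mem_nhds (hL0 ▸ hz)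
        exact hLc.continuousAt.preimage_mem_nhds this
      set φ : ℝ → ℝ := fun t => G (L t) with hφ
      set φ' : ℝ → ℝ := fun t => fderiv ℝ G (L t) v with hφ'
      have hder : ∀ᶠ t in nhds (0:ℝ), HasDerivAt φ (φ' t) t := by
        filter_upwards [hLΩ] with t ht
        exact (hGdiff (L t) ht).hasFDerivAt.comp_hasDerivAt t (hLd t)
      have hmax : IsLocalMax φ 0 := by
        filter_upwards [hLΩ] with t ht
        have := hzmax (subset_closure ht)
        simpa [hφ, hL0] using this
      have hd' : HasDerivAt φ' (d i) 0 := by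
        have h2 : DifferentiableAt ℝ (fun w => fderiv ℝ G w v) z := hdirdiff G hGC2 v z hz
        have h2' : HasFDerivAt (fun w => fderiv ℝ G w v)
            (fderiv ℝ (fun w => fderiv ℝ G w v) z) (L 0) := by
          rw [hL0]; exact h2.hasFDerivAt
        exact h2'.comp_hasDerivAt 0 (hLd 0)
      exact no_local_max_of_pos_second_deriv hder hmax hd' hi
    · -- boundary max
      have hzf : z ∈ frontier Ω := by
        rw [hΩo.frontier_eq]
        exact ⟨hzK, hz⟩
      have hGz : G z = ε * q z := by rw [hG]; simp [htr z hzf]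
      have hx' : G x ≤ G z := hzmax (subset_closure hx)
      have hqz : q z ≤ R ^ 2 := by
        have hzball := hR hzK
        rw [hq']
        have h1 : ‖z‖ ≤ R := by simpa using hzball
        nlinarith [norm_nonneg z]
      have hqx : 0 ≤ q x := by rw [hq']; positivity
      have : g x + ε * q x ≤ ε * q z := by rw [← hGz]; exact hx'
      nlinarith
  by_contra hgx
  push_neg at hgx
  have hkey := key (g x / (2 * (R ^ 2 + 1))) (by positivity)
  rw [div_mul_eq_mul_div, le_div_iff₀ (by positivity)] at hkey
  nlinarith [mul_pos hgx (show (0:ℝ) < R ^ 2 + 2 by positivity), sq_nonneg R]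

/-- The basis product `e_A = e_{j₁} ⋯ e_{j_r}` for `A = {j₁ < ⋯ < j_r} ⊆ {1,…,n}`. -/
noncomputable def eA (n : ℕ) (A : Finset (Fin n)) : CliffordAlgebra (Qneg n) :=
  ((A.sort (· ≤ ·)).map
    (fun j => CliffordAlgebra.ι (Qneg n) (EuclideanSpace.single j 1))).prod

/-- Uniqueness half of the Orlicz decomposition
`L^ψ(Ω,Cl_n) = A^ψ(Ω,Cl_n) ⊕ D̄(W₀^{1,ψ}(Ω,Cl_n))`: if `f = D̄g` with `g` of zero
boundary trace and `f` is left monogenic (`Df = D(D̄g) = 0` on `Ω`), then `f = 0` on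
`Ω`. Here `g = Σ_A g_A e_A`, `D̄ = Σ_i ē_i ∂_i` with `ē_i = -e_i`, and
`f = D̄g = Σ_i Σ_A (∂_i g_A)(-e_i)e_A`. -/
theorem orlicz_decomposition_uniqueness (n : ℕ)
    (b : Module.Basis (Finset (Fin n)) ℝ (CliffordAlgebra (Qneg n)))
    (hb : ∀ A : Finset (Fin n), b A = eA n A)
    (Ω : Set (EuclideanSpace ℝ (Fin n))) (hΩo : IsOpen Ω)
    (hΩb : Bornology.IsBounded Ω)
    (gc : Finset (Fin n) → EuclideanSpace ℝ (Fin n) → ℝ)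
    (hgC2 : ∀ A, ContDiffOn ℝ 2 (gc A) Ω)
    (hgcont : ∀ A, ContinuousOn (gc A) (closure Ω))
    (hgtrace : ∀ A, ∀ x ∈ frontier Ω, gc A x = 0)
    -- `f = D̄g` is left monogenic on `Ω`:
    -- `Df = Σ_j Σ_i Σ_A (∂_j ∂_i g_A) e_j ē_i e_A = 0`.
    (hmonogenic : ∀ x ∈ Ω,
      ∑ j : Fin n, ∑ i : Fin n, ∑ A : Finset (Fin n),
        (fderiv ℝ (fun y => fderiv ℝ (gc A) y (EuclideanSpace.single i 1)) x
            (EuclideanSpace.single j 1)) •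
          (CliffordAlgebra.ι (Qneg n) (EuclideanSpace.single j 1) *
            (-(CliffordAlgebra.ι (Qneg n) (EuclideanSpace.single i 1))) * b A) = 0) :
    -- then `f = D̄g = 0` on `Ω`.
    ∀ x ∈ Ω,
      ∑ i : Fin n, ∑ A : Finset (Fin n),
        (fderiv ℝ (gc A) x (EuclideanSpace.single i 1)) •
          ((-(CliffordAlgebra.ι (Qneg n) (EuclideanSpace.single i 1))) * b A) = 0 := by
  rcases Nat.eq_zero_or_pos n with hn | hn
  · subst hn
    intro x hx
    simp
  · intro x hx
    have hharm : ∀ A : Finset (Fin n), ∀ y ∈ Ω, ∑ i : Fin n,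
        fderiv ℝ (fun w => fderiv ℝ (gc A) w (EuclideanSpace.single i 1)) y
          (EuclideanSpace.single i 1) = 0 := by
      intro A y hy
      have hm := hmonogenic y hy
      rw [Finset.sum_congr rfl (fun j _ => Finset.sum_comm)] at hm
      rw [Finset.sum_comm] at hm
      have hrw : ∀ B : Finset (Fin n),
          ∑ j : Fin n, ∑ i : Fin n,
            (fderiv ℝ (fun w => fderiv ℝ (gc B) w (EuclideanSpace.single i 1)) y
              (EuclideanSpace.single j 1)) •
              (CliffordAlgebra.ι (Qneg n) (EuclideanSpace.single j 1) *
                (-(CliffordAlgebra.ι (Qneg n) (EuclideanSpace.single i 1))) * b B)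
          = (∑ i : Fin n,
              fderiv ℝ (fun w => fderiv ℝ (gc B) w (EuclideanSpace.single i 1)) y
                (EuclideanSpace.single i 1)) • b B := by
        intro B
        have hc := cliff_sum n
          (fun j i => fderiv ℝ (fun w => fderiv ℝ (gc B) w (EuclideanSpace.single i 1)) y
            (EuclideanSpace.single j 1))
          (fun j i => second_symm ((hgC2 B).contDiffAt (hΩo.mem_nhds hy))) (b B)
        simp only [uu] at hc
        exact hc
      rw [Finset.sum_congr rfl (fun B _ => hrw B)] at hm
      exact Fintype.linearIndependent_iff.mp b.linearIndependent _ hm A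
    have hzero : ∀ A : Finset (Fin n), ∀ y ∈ Ω, gc A y = 0 := by
      intro A y hy
      have h1 := harmonic_nonpos hn hΩo hΩb (hgC2 A) (hgcont A) (hgtrace A) (hharm A) y hy
      have hnegharm : ∀ z ∈ Ω, ∑ i : Fin n,
          fderiv ℝ (fun w => fderiv ℝ (fun t => -(gc A t)) w (EuclideanSpace.single i 1)) z
            (EuclideanSpace.single i 1) = 0 := by
        intro z hz
        have hfun : ∀ i : Fin n, (fun w => fderiv ℝ (fun t => -(gc A t)) w
            (EuclideanSpace.single i 1))
            = fun w => -(fderiv ℝ (gc A) w (EuclideanSpace.single i 1)) := by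
          intro i; funext w; rw [fderiv_fun_neg]; simp
        have : ∀ i : Fin n,
            fderiv ℝ (fun w => fderiv ℝ (fun t => -(gc A t)) w (EuclideanSpace.single i 1)) z
              (EuclideanSpace.single i 1)
            = -(fderiv ℝ (fun w => fderiv ℝ (gc A) w (EuclideanSpace.single i 1)) z
              (EuclideanSpace.single i 1)) := by
          intro i
          rw [hfun i]
          rw [fderiv_fun_neg]
          simp
        rw [Finset.sum_congr rfl (fun i _ => this i), Finset.sum_neg_distrib, hharm A z hz,
          neg_zero]
      have h2 := harmonic_nonpos hn hΩo hΩb (hgC2 A).neg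
        ((hgcont A).neg) (fun w hw => by simp [hgtrace A w hw]) hnegharm y hy
      simp only [neg_nonpos] at h2
      linarith
    have hfderiv : ∀ A : Finset (Fin n), fderiv ℝ (gc A) x = 0 := by
      intro A
      have hev : gc A =ᶠ[nhds x] fun _ => 0 := by
        filter_upwards [hΩo.mem_nhds hx] with y hy
        exact hzero A y hy
      rw [hev.fderiv_eq, fderiv_fun_const]
      rfl
    simp [hfderiv]
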